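/- For every n ≥ 0, n! = ∑_{λ ⊢ n} F_λ², where F_λ is the number of standard Young tableaux of shape λ. -/

import Mathlib

open scoped BigOperators

noncomputable section

namespace WAPpr

/-- A partition, represented as a finitely supported function `ℕ →₀ ℕ`
(0-indexed: `lam i` is the `(i+1)`-st part). -/
abbrev Ptn := ℕ →₀ ℕ

/-- `f` is a genuine partition: the parts are weakly decreasing. -/
def IsPtn (f : Ptn) : Prop := ∀ ⦃i j : ℕ⦄, i ≤ j → f j ≤ f i

/-- The size `|λ|` of a partition. -/
def psize (f : Ptn) : ℕ := f.sum fun _ m => m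

/-- The length (number of nonzero parts) of a partition. -/
def plen (f : Ptn) : ℕ := f.support.card

/-- `λ` covers `μ` in Young's lattice. -/
def Covers (lam mu : Ptn) : Prop :=
  IsPtn lam ∧ IsPtn mu ∧ (∀ i, mu i ≤ lam i) ∧ psize mu + 1 = psize lam

/-- The number of standard Young tableaux of shape `λ`, i.e. of saturated
chains from `∅` to `λ` in Young's lattice. -/
def F (lam : Ptn) : ℕ :=
  Nat.card {T : Fin (psize lam + 1) → Ptn //
    T 0 = 0 ∧ T (Fin.last (psize lam)) = lam ∧
    ∀ i : Fin (psize lam), Covers (T i.succ) (T i.castSucc)}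

/-- `conjF lam j` is the number of parts of `lam` that are `> j`,
i.e. the `(j+1)`-st part of the conjugate partition. -/
def conjF (lam : Ptn) (j : ℕ) : ℕ := (lam.support.filter fun i => j < lam i).card

/-- The cells of the Young diagram of `λ` (0-indexed). -/
def cells (lam : Ptn) : Finset (ℕ × ℕ) :=
  lam.support.biUnion fun i => ({i} : Finset ℕ) ×ˢ Finset.range (lam i)

/-- The hook length of the (0-indexed) cell `(i,j)` of `λ`. -/
def hook (lam : Ptn) (i j : ℕ) : ℕ := lam i + conjF lam j - i - j - 1

/-- The hook length product `H(λ)`. -/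
def hookProd (lam : Ptn) : ℕ := ∏ c ∈ cells lam, hook lam c.1 c.2

/-- The degree vector `n_λ = (λ_r, λ_{r-1}+1, …, λ_1+r-1)` (0-indexed). -/
def degv (lam : Ptn) (i : ℕ) : ℕ := lam (plen lam - 1 - i) + i

/-- The Vandermonde factor `Δ(n_λ) = ∏_{i<j} (n_j - n_i)`. -/
def vand (lam : Ptn) : ℝ :=
  ∏ p ∈ (Finset.range (plen lam) ×ˢ Finset.range (plen lam)).filter
      (fun p => p.1 < p.2),
    ((degv lam p.2 : ℝ) - (degv lam p.1 : ℝ))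

/-- The Wronskian determinant of `r` polynomials. -/
def wronskian (r : ℕ) (f : ℕ → Polynomial ℝ) : Polynomial ℝ :=
  Matrix.det (Matrix.of fun i j : Fin r =>
    (fun q => Polynomial.derivative q)^[(j : ℕ)] (f (i : ℕ)))

/-- The Wronskian Appell polynomial `A_λ = Wr[A_{n_1},…,A_{n_r}] / Δ(n_λ)`. -/
def wap (A : ℕ → Polynomial ℝ) (lam : Ptn) : Polynomial ℝ :=
  (vand lam)⁻¹ • wronskian (plen lam) (fun i => A (degv lam i))

/-- `(A_n)` is an Appell sequence: `A_0 = 1` and `A_n' = n·A_{n-1}`. -/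
def IsAppell (A : ℕ → Polynomial ℝ) : Prop :=
  A 0 = 1 ∧ ∀ n : ℕ, 1 ≤ n → Polynomial.derivative (A n) = n • A (n - 1)

/-- The set of cells of the skew diagram `λ/μ`. -/
def skewSet (lam mu : Ptn) : Set (ℕ × ℕ) := {p | mu p.1 ≤ p.2 ∧ p.2 < lam p.1}

/-- Two cells are adjacent (share an edge). -/
def Adj (p q : ℕ × ℕ) : Prop :=
  (p.1 = q.1 ∧ (p.2 + 1 = q.2 ∨ q.2 + 1 = p.2)) ∨
  (p.2 = q.2 ∧ (p.1 + 1 = q.1 ∨ q.1 + 1 = p.1))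

/-- A set of cells is (edge-)connected. -/
def ConnectedIn (S : Set (ℕ × ℕ)) : Prop :=
  ∀ a b : S, Relation.ReflTransGen (fun x y : S => Adj x.1 y.1) a b

/-- A set of cells contains no 2×2 square. -/
def No2x2 (S : Set (ℕ × ℕ)) : Prop :=
  ¬ ∃ i j : ℕ, (i, j) ∈ S ∧ (i + 1, j) ∈ S ∧ (i, j + 1) ∈ S ∧ (i + 1, j + 1) ∈ S

/-- `λ/μ` is a rim hook of size `k`. -/
def IsRimHook (lam mu : Ptn) (k : ℕ) : Prop :=
  IsPtn lam ∧ IsPtn mu ∧ (∀ i, mu i ≤ lam i) ∧ psize mu + k = psize lam ∧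
  ConnectedIn (skewSet lam mu) ∧ No2x2 (skewSet lam mu)

/-- The height of the rim hook `λ/μ`: one less than the number of rows. -/
def rhHeight (lam mu : Ptn) : ℕ :=
  Nat.card {i : ℕ | ∃ j, (i, j) ∈ skewSet lam mu} - 1

/-! ### Symmetric functions, `h`-model:
`Λ = ℚ[h_1, h_2, …]` with `X m = h_{m+1}`. -/

abbrev SymF := MvPolynomial ℕ ℚ

/-- The complete homogeneous symmetric function `h_m` (as a free generator). -/
def hsym (m : ℕ) : SymF := if m = 0 then 1 else MvPolynomial.X (m - 1)

/-- `h_k` extended to integer indices by `0` for `k < 0`. -/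
def hz (k : ℤ) : SymF := if k < 0 then 0 else hsym k.toNat

/-- The Schur function `s_λ`, via the Jacobi–Trudi formula
`s_λ = det[h_{λ_i - i + j}]`. -/
def schur (lam : Ptn) : SymF :=
  Matrix.det (Matrix.of fun i j : Fin (plen lam) =>
    hz ((lam (i : ℕ) : ℤ) - (i : ℕ) + (j : ℕ)))

/-! ### Symmetric functions, `p`-model:
`Λ_ℚ = ℚ[p_1, p_2, …]` with `X m = p_{m+1}`. -/

/-- The power sum `p_m` (as a free generator; only used for `m ≥ 1`). -/
def psym (m : ℕ) : SymF := MvPolynomial.X (m - 1)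

/-- The complete homogeneous symmetric functions, expressed in the power
sums via the Newton recursion `n h_n = ∑_{k=1}^n p_k h_{n-k}`. -/
def hh : ℕ → SymF
  | 0 => 1
  | (n + 1) => ((n + 1 : ℚ))⁻¹ • ∑ k ∈ Finset.range (n + 1), psym (k + 1) * hh (n - k)
termination_by n => n
decreasing_by exact Nat.lt_succ_of_le (Nat.sub_le _ _)

/-- `hh` extended to integer indices. -/
def hzP (k : ℤ) : SymF := if k < 0 then 0 else hh k.toNat

/-- The Schur function in the `p`-model, via Jacobi–Trudi. -/
def schurP (lam : Ptn) : SymF :=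
  Matrix.det (Matrix.of fun i j : Fin (plen lam) =>
    hzP ((lam (i : ℕ) : ℤ) - (i : ℕ) + (j : ℕ)))

/-- The elementary symmetric functions in the `p`-model: `e_n = ω(h_n)` where
`ω(p_k) = (-1)^{k-1} p_k`. -/
def ee (n : ℕ) : SymF :=
  MvPolynomial.bind₁ (fun m : ℕ => ((-1 : ℚ) ^ m) • MvPolynomial.X m) (hh n)

/-- The exponential of a power series with coefficients in `Λ_ℚ`
(correct for series with zero constant term). -/
def pexp (S : PowerSeries SymF) : PowerSeries SymF :=
  PowerSeries.mk fun n =>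
    ∑ k ∈ Finset.range (n + 1), (k.factorial : ℚ)⁻¹ • (PowerSeries.coeff n (S ^ k))

/-- The exponential of a real power series (correct for series with zero
constant term). -/
def rexp (S : PowerSeries ℝ) : PowerSeries ℝ :=
  PowerSeries.mk fun n =>
    ∑ k ∈ Finset.range (n + 1), (k.factorial : ℝ)⁻¹ * (PowerSeries.coeff n (S ^ k))

/-- The moment exponential generating function `f_A(t) = ∑ A_k(0) t^k/k!`. -/
def fser (A : ℕ → Polynomial ℝ) : PowerSeries ℝ :=
  PowerSeries.mk fun k => (A k).eval 0 / k.factorial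

/-- The column partition `(1^n)`. -/
def colP (n : ℕ) : Ptn :=
  Finsupp.onFinset (Finset.range n) (fun i => if i < n then 1 else 0)
    (by intro a ha; rw [Finset.mem_range]; by_contra h; simp [h] at ha)

/-- The conjugate partition `λ'`. -/
def conjP (lam : Ptn) : Ptn :=
  Finsupp.onFinset (Finset.range (lam.support.sup fun i => lam i))
    (fun j => conjF lam j)
    (by
      intro a ha
      rw [Finset.mem_range]
      obtain ⟨i, hi⟩ := Finset.card_pos.mp (Nat.pos_of_ne_zero ha)
      rw [Finset.mem_filter] at hi
      exact lt_of_lt_of_le hi.2 (Finset.le_sup hi.1))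


/-! ### Auxiliary development for the proof -/

-- basics
lemma isPtn_zero : IsPtn 0 := fun i j _ => le_refl _
lemma psize_zero : psize 0 = 0 := rfl
lemma psize_eq_sum {f : Ptn} {s : Finset ℕ} (hs : f.support ⊆ s) :
    psize f = ∑ i ∈ s, f i :=
  Finsupp.sum_of_support_subset f hs _ (fun _ _ => rfl)
lemma le_psize (f : Ptn) (i : ℕ) : f i ≤ psize f := by
  by_cases h : f i = 0
  · simp [h]
  · exact Finset.single_le_sum (f := fun j => f j) (fun _ _ => Nat.zero_le _)
      (Finsupp.mem_support_iff.2 h)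
lemma psize_add (f g : Ptn) : psize (f + g) = psize f + psize g := by
  unfold psize
  exact Finsupp.sum_add_index' (fun _ => rfl) (fun _ _ _ => rfl)
lemma psize_single (i k : ℕ) : psize (Finsupp.single i k) = k := by
  unfold psize; exact Finsupp.sum_single_index rfl
lemma psize_eq_zero {f : Ptn} (h : psize f = 0) : f = 0 := by
  ext i
  have := le_psize f i
  simp only [Finsupp.coe_zero, Pi.zero_apply]
  omega
lemma psize_le_of_le {f g : Ptn} (h : ∀ i, f i ≤ g i) : psize f ≤ psize g := by
  have hsub : f.support ⊆ g.support := by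
    intro i hi
    rw [Finsupp.mem_support_iff] at *
    intro h0; exact hi (Nat.le_zero.1 (h0 ▸ h i))
  rw [psize_eq_sum hsub, psize_eq_sum (le_refl g.support)]
  exact Finset.sum_le_sum fun i _ => h i
lemma eq_of_le_of_psize_le {f g : Ptn} (h : ∀ i, f i ≤ g i)
    (hs : psize g ≤ psize f) : f = g := by
  have hsub : f.support ⊆ g.support := by
    intro i hi
    rw [Finsupp.mem_support_iff] at *
    intro h0; exact hi (Nat.le_zero.1 (h0 ▸ h i))
  rw [psize_eq_sum hsub, psize_eq_sum (le_refl g.support)] at hs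
  have := (Finset.sum_eq_sum_iff_of_le (fun i _ => h i)).1
    (le_antisymm (Finset.sum_le_sum fun i _ => h i) hs)
  ext i
  by_cases hi : i ∈ g.support
  · exact this i hi
  · have hg : g i = 0 := Finsupp.notMem_support_iff.1 hi
    have := h i; omega
lemma psize_lt_of_lt {f g : Ptn} (h : ∀ i, f i ≤ g i) {k : ℕ} (hk : f k < g k) :
    psize f < psize g := by
  rcases lt_or_ge (psize f) (psize g) with h' | h'
  · exact h'
  · have := eq_of_le_of_psize_le h h'
    subst this; omega
lemma plen_le_psize (f : Ptn) : plen f ≤ psize f := by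
  unfold plen
  rw [psize_eq_sum (le_refl f.support)]
  calc f.support.card = ∑ _i ∈ f.support, 1 := by simp
  _ ≤ ∑ i ∈ f.support, f i := Finset.sum_le_sum fun i hi =>
      Nat.one_le_iff_ne_zero.2 (Finsupp.mem_support_iff.1 hi)
lemma supp_eq_range {f : Ptn} (hf : IsPtn f) : f.support = Finset.range (plen f) := by
  apply Finset.eq_of_subset_of_card_le
  · intro j hj
    rw [Finset.mem_range]
    have hsub : Finset.range (j + 1) ⊆ f.support := by
      intro i hi
      rw [Finset.mem_range] at hi
      rw [Finsupp.mem_support_iff] at hj ⊢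
      have := hf (Nat.lt_succ_iff.1 hi)
      omega
    have := Finset.card_le_card hsub
    simpa [plen] using this
  · simp [plen]
lemma pos_iff_lt_plen {f : Ptn} (hf : IsPtn f) {i : ℕ} : 0 < f i ↔ i < plen f := by
  constructor
  · intro h
    rw [← Finset.mem_range, ← supp_eq_range hf]
    exact Finsupp.mem_support_iff.2 (by omega)
  · intro h
    have : i ∈ f.support := by rw [supp_eq_range hf, Finset.mem_range]; exact h
    have := Finsupp.mem_support_iff.1 this
    omega
lemma psize_eq_one {d : Ptn} (h : psize d = 1) : ∃ i, d = Finsupp.single i 1 := by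
  have hne : d ≠ 0 := by
    intro h0; rw [h0] at h; simp [psize_zero] at h
  obtain ⟨i, hi⟩ := Finsupp.ne_iff.1 hne
  simp only [Finsupp.coe_zero, Pi.zero_apply] at hi
  refine ⟨i, ?_⟩
  have hle := le_psize d i
  have hdi : d i = 1 := by omega
  ext j
  rcases eq_or_ne j i with rfl | hj
  · simp [hdi]
  · rw [Finsupp.single_eq_of_ne' (Ne.symm hj)]
    by_contra hdj
    have hji : j ∈ d.support := Finsupp.mem_support_iff.2 hdj
    have hii : i ∈ d.support := Finsupp.mem_support_iff.2 (by omega)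
    have hsub : {i, j} ⊆ d.support := by
      intro x hx; rcases Finset.mem_insert.1 hx with rfl | hx
      · exact hii
      · rw [Finset.mem_singleton] at hx; subst hx; exact hji
    have h2 : (2 : ℕ) ≤ psize d := by
      rw [psize_eq_sum (le_refl _)]
      calc (2:ℕ) = ∑ _x ∈ ({i, j} : Finset ℕ), 1 := by
            rw [Finset.sum_const, Finset.card_insert_of_notMem (by
              simp only [Finset.mem_singleton]; exact fun h => hj h.symm)]
            simp
      _ ≤ ∑ x ∈ ({i,j} : Finset ℕ), d x := Finset.sum_le_sum (fun x hx => by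
            rcases Finset.mem_insert.1 hx with rfl | hx
            · omega
            · rw [Finset.mem_singleton] at hx; subst hx; omega)
      _ ≤ ∑ x ∈ d.support, d x := Finset.sum_le_sum_of_subset hsub
    omega

-- cover characterization
def addCell (f : Ptn) (i : ℕ) : Ptn := f + Finsupp.single i 1
def Addable (f : Ptn) (i : ℕ) : Prop := i = 0 ∨ f i < f (i - 1)
def Removable (f : Ptn) (i : ℕ) : Prop := f (i + 1) < f i

lemma addCell_apply (f : Ptn) (i j : ℕ) :
    addCell f i j = f j + if i = j then 1 else 0 := by
  simp [addCell, Finsupp.single_apply]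
lemma psize_addCell (f : Ptn) (i : ℕ) : psize (addCell f i) = psize f + 1 := by
  rw [addCell, psize_add, psize_single]
lemma isPtn_addCell {f : Ptn} (hf : IsPtn f) {i : ℕ} (hi : Addable f i) :
    IsPtn (addCell f i) := by
  intro a b hab
  rw [addCell_apply, addCell_apply]
  rcases eq_or_ne i b with rfl | hib
  · rcases eq_or_ne i a with rfl | hia
    · simp
    · have ha : a < i := lt_of_le_of_ne hab (Ne.symm hia)
      have hi1 : f i < f (i - 1) := by
        rcases hi with h0 | h; · omega
        ·  exact h
      have h2 : f (i - 1) ≤ f a := hf (by omega)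
      simp [hia]
      omega
  · have h2 := hf hab
    rcases eq_or_ne i a with rfl | hia
    · simp [hib]
      omega
    · simp [hib, hia]
      omega
lemma covers_addCell {f : Ptn} (hf : IsPtn f) {i : ℕ} (hi : Addable f i) :
    Covers (addCell f i) f := by
  refine ⟨isPtn_addCell hf hi, hf, fun j => ?_, by rw [psize_addCell]⟩
  rw [addCell_apply]; omega
lemma exists_addCell_of_covers {lam mu : Ptn} (h : Covers lam mu) :
    ∃ i, Addable mu i ∧ lam = addCell mu i := by
  obtain ⟨hl, hm, hle, hs⟩ := h
  -- the difference has psize 1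
  set s := lam.support ∪ mu.support with hsdef
  have hls : lam.support ⊆ s := Finset.subset_union_left
  have hms : mu.support ⊆ s := Finset.subset_union_right
  set d : Ptn := lam - mu with hd
  have hdapp : ∀ j, d j = lam j - mu j := fun j => Finsupp.tsub_apply lam mu j
  have hlam : ∀ j, lam j = mu j + d j := by
    intro j; rw [hdapp]; have := hle j; omega
  have hds : d.support ⊆ s := by
    intro j hj
    rw [Finsupp.mem_support_iff] at hj
    rw [hdapp j] at hj
    exact hls (Finsupp.mem_support_iff.2 (by omega))
  have hsum : psize lam = psize mu + psize d := by
    rw [psize_eq_sum hls, psize_eq_sum hms, psize_eq_sum hds, ← Finset.sum_add_distrib]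
    exact Finset.sum_congr rfl fun j _ => hlam j
  have hd1 : psize d = 1 := by omega
  obtain ⟨i, hi⟩ := psize_eq_one hd1
  have hlam' : lam = addCell mu i := by
    ext j; rw [addCell_apply, hlam j, hi, Finsupp.single_apply]
  refine ⟨i, ?_, hlam'⟩
  rcases Nat.eq_zero_or_pos i with rfl | hipos
  · exact Or.inl rfl
  · right
    have h1 : lam (i - 1) = mu (i - 1) := by
      rw [hlam', addCell_apply, if_neg (by omega)]
      omega
    have h2 : lam i = mu i + 1 := by
      rw [hlam'] ; rw [addCell_apply]; rw [if_pos rfl]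
    have := hl (show i - 1 ≤ i by omega)
    omega

def delCell (f : Ptn) (i : ℕ) : Ptn := f - Finsupp.single i 1
lemma delCell_apply (f : Ptn) (i j : ℕ) :
    delCell f i j = f j - if i = j then 1 else 0 := by
  simp [delCell, Finsupp.tsub_apply, Finsupp.single_apply]
lemma addCell_delCell {f : Ptn} {i : ℕ} (h : 0 < f i) :
    addCell (delCell f i) i = f := by
  ext j; rw [addCell_apply, delCell_apply]
  rcases eq_or_ne i j with rfl | hij
  · simp; omega
  · simp [if_neg hij]
lemma isPtn_delCell {f : Ptn} (hf : IsPtn f) {i : ℕ} (hi : Removable f i) :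
    IsPtn (delCell f i) := by
  intro a b hab
  rw [delCell_apply, delCell_apply]
  have hrem : f (i+1) < f i := hi
  rcases eq_or_ne i a with rfl | hia
  · rcases eq_or_ne i b with rfl | hib
    · simp
    · have hb : i + 1 ≤ b := by omega
      have h3 : f b ≤ f (i + 1) := hf hb
      simp [hib]
      omega
  · have h2 := hf hab
    rcases eq_or_ne i b with rfl | hib
    · simp [hia]
      omega
    · simp [hia, hib]
      omega
lemma covers_delCell {f : Ptn} (hf : IsPtn f) {i : ℕ} (hi : Removable f i) :
    Covers f (delCell f i) := by
  have hpos : 0 < f i := by have : f (i+1) < f i := hi; omega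
  refine ⟨hf, isPtn_delCell hf hi, fun j => by rw [delCell_apply]; omega, ?_⟩
  have := psize_addCell (delCell f i) i
  rw [addCell_delCell hpos] at this
  omega
lemma exists_delCell_of_covers {mu rho : Ptn} (h : Covers mu rho) :
    ∃ i, Removable mu i ∧ rho = delCell mu i := by
  obtain ⟨i, hadd, hmu⟩ := exists_addCell_of_covers h
  have hrho : rho = delCell mu i := by
    ext j; rw [delCell_apply, hmu, addCell_apply]
    omega
  refine ⟨i, ?_, hrho⟩
  have h1 : mu i = rho i + 1 := by rw [hmu, addCell_apply, if_pos rfl]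
  have h2 : mu (i+1) = rho (i+1) := by rw [hmu, addCell_apply, if_neg (by omega)]; omega
  have := h.2.1 (show i ≤ i + 1 by omega)
  show mu (i+1) < mu i
  omega
attribute [local instance] Classical.propDecidable

-- finiteness of partitions of bounded size
lemma finite_ptnLE (N : ℕ) : {f : Ptn | IsPtn f ∧ psize f ≤ N}.Finite := by
  rw [Set.finite_coe_iff.symm]
  apply Finite.of_injective (f := fun (f : {f : Ptn | IsPtn f ∧ psize f ≤ N}) =>
    (fun i : Fin N => (⟨(f : Ptn) i, by
      have h1 := le_psize (f : Ptn) i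
      have h2 := f.2.2
      omega⟩ : Fin (N+1)) : Fin N → Fin (N+1)))
  rintro ⟨f, hf, hfN⟩ ⟨g, hg, hgN⟩ h
  simp only [Subtype.mk.injEq]
  ext i
  by_cases hi : i < N
  · exact congrArg Fin.val (congrFun h ⟨i, hi⟩)
  · have hfi : f i = 0 := by
      by_contra h0
      have : i < plen f := (pos_iff_lt_plen hf).1 (by omega)
      have := plen_le_psize f
      omega
    have hgi : g i = 0 := by
      by_contra h0
      have : i < plen g := (pos_iff_lt_plen hg).1 (by omega)
      have := plen_le_psize g
      omega
    rw [hfi, hgi]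
lemma finite_ptnEQ (N : ℕ) : {f : Ptn | IsPtn f ∧ psize f = N}.Finite :=
  (finite_ptnLE N).subset (fun f ⟨h1, h2⟩ => ⟨h1, le_of_eq h2⟩)

/-- The finset of partitions of `n`. -/
def Pn (n : ℕ) : Finset Ptn := (finite_ptnEQ n).toFinset
lemma mem_Pn {n : ℕ} {f : Ptn} : f ∈ Pn n ↔ IsPtn f ∧ psize f = n := by
  simp [Pn, Set.Finite.mem_toFinset]

-- corner sets
def addSet (f : Ptn) : Finset ℕ := (Finset.range (plen f + 1)).filter (fun i => i = 0 ∨ f i < f (i-1))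
def remSet (f : Ptn) : Finset ℕ := (Finset.range (plen f)).filter (fun i => f (i+1) < f i)
lemma mem_addSet {f : Ptn} (hf : IsPtn f) {i : ℕ} : i ∈ addSet f ↔ Addable f i := by
  rw [addSet, Finset.mem_filter, Finset.mem_range]
  constructor
  · exact fun h => h.2
  · intro h
    refine ⟨?_, h⟩
    rcases h with rfl | h
    · omega
    · have hpos : 0 < f (i-1) := by omega
      have := (pos_iff_lt_plen hf).1 hpos
      omega
lemma mem_remSet {f : Ptn} (hf : IsPtn f) {i : ℕ} : i ∈ remSet f ↔ Removable f i := by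
  rw [remSet, Finset.mem_filter, Finset.mem_range]
  constructor
  · exact fun h => h.2
  · intro h
    have h' : f (i+1) < f i := h
    have := (pos_iff_lt_plen hf).1 (show 0 < f i by omega)
    exact ⟨this, h⟩
lemma card_addSet {f : Ptn} (hf : IsPtn f) :
    (addSet f).card = (remSet f).card + 1 := by
  have hset : addSet f = insert 0 ((remSet f).image (· + 1)) := by
    ext i
    rw [mem_addSet hf, Finset.mem_insert, Finset.mem_image]
    constructor
    · intro h
      rcases h with rfl | h
      · exact Or.inl rfl
      · rcases Nat.eq_zero_or_pos i with rfl | hipos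
        · exact Or.inl rfl
        · right
          refine ⟨i - 1, ?_, by omega⟩
          rw [mem_remSet hf]
          show f (i - 1 + 1) < f (i - 1)
          have : i - 1 + 1 = i := by omega
          rw [this]
          exact h
    · intro h
      rcases h with rfl | ⟨j, hj, rfl⟩
      · exact Or.inl rfl
      · right
        rw [mem_remSet hf] at hj
        have : j + 1 - 1 = j := by omega
        rw [this]
        exact hj
  rw [hset, Finset.card_insert_of_notMem (by
    simp only [Finset.mem_image]
    rintro ⟨j, _, hj⟩
    omega), Finset.card_image_of_injective _ (fun a b => by omega)]

-- the up and down filters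
lemma up_filter_eq {mu : Ptn} (hmu : IsPtn mu) {n : ℕ} (hn : psize mu = n) :
    (Pn (n+1)).filter (fun lam => Covers lam mu) = (addSet mu).image (addCell mu) := by
  ext lam
  rw [Finset.mem_filter, mem_Pn, Finset.mem_image]
  constructor
  · rintro ⟨⟨h1, h2⟩, hcov⟩
    obtain ⟨i, hi, rfl⟩ := exists_addCell_of_covers hcov
    exact ⟨i, (mem_addSet hmu).2 hi, rfl⟩
  · rintro ⟨i, hi, rfl⟩
    rw [mem_addSet hmu] at hi
    have hcov := covers_addCell hmu hi
    exact ⟨⟨hcov.1, by rw [psize_addCell]; omega⟩, hcov⟩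
lemma down_filter_eq {mu : Ptn} (hmu : IsPtn mu) {n : ℕ} (hn : psize mu = n) :
    (Pn (n-1)).filter (fun rho => Covers mu rho) = (remSet mu).image (delCell mu) := by
  ext rho
  rw [Finset.mem_filter, mem_Pn, Finset.mem_image]
  constructor
  · rintro ⟨⟨h1, h2⟩, hcov⟩
    obtain ⟨i, hi, rfl⟩ := exists_delCell_of_covers hcov
    exact ⟨i, (mem_remSet hmu).2 hi, rfl⟩
  · rintro ⟨i, hi, rfl⟩
    rw [mem_remSet hmu] at hi
    have hcov := covers_delCell hmu hi
    have hsz := hcov.2.2.2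
    exact ⟨⟨hcov.2.1, by omega⟩, hcov⟩
lemma card_up_filter {mu : Ptn} (hmu : IsPtn mu) {n : ℕ} (hn : psize mu = n) :
    ((Pn (n+1)).filter (fun lam => Covers lam mu)).card = (addSet mu).card := by
  rw [up_filter_eq hmu hn]
  apply Finset.card_image_of_injective
  intro a b hab
  by_contra hne
  have h1 : addCell mu a a = addCell mu b a := by rw [hab]
  rw [addCell_apply, addCell_apply, if_pos rfl, if_neg (fun h => hne h.symm)] at h1
  omega
lemma card_down_filter {mu : Ptn} (hmu : IsPtn mu) {n : ℕ} (hn : psize mu = n) :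
    ((Pn (n-1)).filter (fun rho => Covers mu rho)).card = (remSet mu).card := by
  rw [down_filter_eq hmu hn]
  apply Finset.card_image_of_injOn
  intro a ha b hb hab
  rw [Finset.mem_coe, mem_remSet hmu] at ha hb
  have hpa : 0 < mu a := by have : mu (a+1) < mu a := ha; omega
  by_contra hne
  have h1 : delCell mu a a = delCell mu b a := by rw [hab]
  rw [delCell_apply, delCell_apply, if_pos rfl, if_neg (fun h => hne h.symm)] at h1
  omega
-- sup and inf of partitions
def psup (f g : Ptn) : Ptn := Finsupp.zipWith max (by simp) f g
def pinf (f g : Ptn) : Ptn := Finsupp.zipWith min (by simp) f g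
lemma psup_apply (f g : Ptn) (i : ℕ) : psup f g i = max (f i) (g i) := rfl
lemma pinf_apply (f g : Ptn) (i : ℕ) : pinf f g i = min (f i) (g i) := rfl
lemma isPtn_psup {f g : Ptn} (hf : IsPtn f) (hg : IsPtn g) : IsPtn (psup f g) :=
  fun i j hij => by rw [psup_apply, psup_apply]; exact max_le_max (hf hij) (hg hij)
lemma isPtn_pinf {f g : Ptn} (hf : IsPtn f) (hg : IsPtn g) : IsPtn (pinf f g) :=
  fun i j hij => by rw [pinf_apply, pinf_apply]; exact min_le_min (hf hij) (hg hij)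
lemma psize_psup_add_pinf (f g : Ptn) :
    psize (psup f g) + psize (pinf f g) = psize f + psize g := by
  set s := f.support ∪ g.support with hs
  have hfs : f.support ⊆ s := Finset.subset_union_left
  have hgs : g.support ⊆ s := Finset.subset_union_right
  have hsup : (psup f g).support ⊆ s := (Finsupp.support_zipWith).trans (le_refl _)
  have hinf : (pinf f g).support ⊆ s := (Finsupp.support_zipWith).trans (le_refl _)
  rw [psize_eq_sum hfs, psize_eq_sum hgs, psize_eq_sum hsup, psize_eq_sum hinf,
    ← Finset.sum_add_distrib, ← Finset.sum_add_distrib]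
  exact Finset.sum_congr rfl fun i _ => by
    rw [psup_apply, pinf_apply]; omega
lemma exists_lt_of_ne {f g : Ptn} (h : f ≠ g) (hs : psize f = psize g) :
    ∃ k, f k < g k := by
  by_contra hk
  push_neg at hk
  exact h (eq_of_le_of_psize_le hk (le_of_eq hs)).symm

-- off-diagonal counting
lemma up2_filter {mu nu : Ptn} (hmu : IsPtn mu) (hnu : IsPtn nu) {n : ℕ}
    (hm : psize mu = n) (hn : psize nu = n) (hne : mu ≠ nu) :
    (Pn (n+1)).filter (fun lam => Covers lam mu ∧ Covers lam nu) =
      if psize (psup mu nu) = n + 1 then {psup mu nu} else ∅ := by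
  have hsup_lt : n < psize (psup mu nu) := by
    obtain ⟨k, hk⟩ := exists_lt_of_ne hne (hm.trans hn.symm)
    have := psize_lt_of_lt (f := mu) (g := psup mu nu)
      (fun i => by rw [psup_apply]; omega) (k := k) (by rw [psup_apply]; omega)
    omega
  ext lam
  rw [Finset.mem_filter, mem_Pn]
  constructor
  · rintro ⟨⟨h1, h2⟩, hcm, hcn⟩
    have hle : ∀ i, psup mu nu i ≤ lam i := fun i => by
      rw [psup_apply]
      have := hcm.2.2.1 i
      have := hcn.2.2.1 i
      omega
    have hps : psize (psup mu nu) ≤ n + 1 := h2 ▸ psize_le_of_le hle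
    have heq : psize (psup mu nu) = n + 1 := by omega
    have : psup mu nu = lam := eq_of_le_of_psize_le hle (by omega)
    rw [if_pos heq, Finset.mem_singleton]
    exact this.symm
  · intro h
    by_cases hps : psize (psup mu nu) = n + 1
    · rw [if_pos hps, Finset.mem_singleton] at h
      subst h
      have hP := isPtn_psup hmu hnu
      refine ⟨⟨hP, hps⟩, ⟨hP, hmu, fun i => by rw [psup_apply]; omega, by omega⟩,
        ⟨hP, hnu, fun i => by rw [psup_apply]; omega, by omega⟩⟩
    · rw [if_neg hps] at h
      exact absurd h (Finset.notMem_empty lam)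
lemma down2_filter {mu nu : Ptn} (hmu : IsPtn mu) (hnu : IsPtn nu) {n : ℕ}
    (hm : psize mu = n) (hn : psize nu = n) (hne : mu ≠ nu) :
    (Pn (n-1)).filter (fun rho => Covers mu rho ∧ Covers nu rho) =
      if psize (pinf mu nu) = n - 1 then {pinf mu nu} else ∅ := by
  have hinf_lt : psize (pinf mu nu) < n := by
    obtain ⟨k, hk⟩ := exists_lt_of_ne hne.symm (hn.trans hm.symm)
    have := psize_lt_of_lt (f := pinf mu nu) (g := mu)
      (fun i => by rw [pinf_apply]; omega) (k := k) (by rw [pinf_apply]; omega)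
    omega
  ext rho
  rw [Finset.mem_filter, mem_Pn]
  constructor
  · rintro ⟨⟨h1, h2⟩, hcm, hcn⟩
    have hle : ∀ i, rho i ≤ pinf mu nu i := fun i => by
      rw [pinf_apply]
      have := hcm.2.2.1 i
      have := hcn.2.2.1 i
      omega
    have hn1 : psize rho + 1 = n := by have := hcm.2.2.2; omega
    have hps : psize rho ≤ psize (pinf mu nu) := psize_le_of_le hle
    have heq : psize (pinf mu nu) = n - 1 := by omega
    have : rho = pinf mu nu := eq_of_le_of_psize_le hle (by omega)
    rw [if_pos heq, Finset.mem_singleton]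
    exact this
  · intro h
    by_cases hps : psize (pinf mu nu) = n - 1
    · rw [if_pos hps, Finset.mem_singleton] at h
      subst h
      have hP := isPtn_pinf hmu hnu
      refine ⟨⟨hP, hps⟩, ⟨hmu, hP, fun i => by rw [pinf_apply]; omega, by omega⟩,
        ⟨hnu, hP, fun i => by rw [pinf_apply]; omega, by omega⟩⟩
    · rw [if_neg hps] at h
      exact absurd h (Finset.notMem_empty rho)

/-- The key local "differential poset" identity. -/
lemma updown_card {mu nu : Ptn} (hmu : IsPtn mu) (hnu : IsPtn nu) {n : ℕ}
    (hm : psize mu = n) (hn : psize nu = n) :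
    ((Pn (n+1)).filter (fun lam => Covers lam mu ∧ Covers lam nu)).card =
    ((Pn (n-1)).filter (fun rho => Covers mu rho ∧ Covers nu rho)).card +
      (if mu = nu then 1 else 0) := by
  rcases eq_or_ne mu nu with rfl | hne
  · rw [if_pos rfl]
    have e1 : (Pn (n+1)).filter (fun lam => Covers lam mu ∧ Covers lam mu) =
        (Pn (n+1)).filter (fun lam => Covers lam mu) := by
      apply Finset.filter_congr; intro x _; simp [and_self]
    have e2 : (Pn (n-1)).filter (fun rho => Covers mu rho ∧ Covers mu rho) =
        (Pn (n-1)).filter (fun rho => Covers mu rho) := by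
      apply Finset.filter_congr; intro x _; simp [and_self]
    rw [e1, e2, card_up_filter hmu hm, card_down_filter hmu hm, card_addSet hmu]
  · rw [if_neg hne, up2_filter hmu hnu hm hn hne, down2_filter hmu hnu hm hn hne]
    have hsum := psize_psup_add_pinf mu nu
    have hsup_lt : n < psize (psup mu nu) := by
      obtain ⟨k, hk⟩ := exists_lt_of_ne hne (hm.trans hn.symm)
      have := psize_lt_of_lt (f := mu) (g := psup mu nu)
        (fun i => by rw [psup_apply]; omega) (k := k) (by rw [psup_apply]; omega)
      omega
    have hinf_lt : psize (pinf mu nu) < n := by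
      obtain ⟨k, hk⟩ := exists_lt_of_ne hne.symm (hn.trans hm.symm)
      have := psize_lt_of_lt (f := pinf mu nu) (g := mu)
        (fun i => by rw [pinf_apply]; omega) (k := k) (by rw [pinf_apply]; omega)
      omega
    by_cases hps : psize (psup mu nu) = n + 1
    · rw [if_pos hps, if_pos (by omega)]
      simp
    · rw [if_neg hps, if_neg (by omega)]
      simp
-- chain types
def CT (k : ℕ) (lam : Ptn) : Type :=
  {T : Fin (k+1) → Ptn // T 0 = 0 ∧ T (Fin.last k) = lam ∧
    ∀ i : Fin k, Covers (T i.succ) (T i.castSucc)}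

lemma F_eq (lam : Ptn) : F lam = Nat.card (CT (psize lam) lam) := rfl

lemma chain_prop {k : ℕ} (T : Fin (k+1) → Ptn) (h0 : T 0 = 0)
    (hcov : ∀ i : Fin k, Covers (T i.succ) (T i.castSucc)) :
    ∀ m (h : m < k + 1), IsPtn (T ⟨m, h⟩) ∧ psize (T ⟨m, h⟩) = m := by
  intro m
  induction m with
  | zero =>
    intro h
    have h0' : (⟨0, h⟩ : Fin (k+1)) = 0 := rfl
    rw [h0', h0]
    exact ⟨isPtn_zero, psize_zero⟩
  | succ m ih =>
    intro h
    have hm : m < k := by omega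
    have hc := hcov ⟨m, hm⟩
    have h1 : (⟨m, hm⟩ : Fin k).succ = ⟨m+1, h⟩ := rfl
    have h2 : (⟨m, hm⟩ : Fin k).castSucc = ⟨m, by omega⟩ := rfl
    rw [h1, h2] at hc
    obtain ⟨ih1, ih2⟩ := ih (by omega)
    refine ⟨hc.1, ?_⟩
    have := hc.2.2.2
    omega

instance CT_finite (k : ℕ) (lam : Ptn) : Finite (CT k lam) := by
  have hfin : {f : Ptn | IsPtn f ∧ psize f ≤ k}.Finite := finite_ptnLE k
  have : Finite ↥{f : Ptn | IsPtn f ∧ psize f ≤ k} := hfin.to_subtype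
  apply Finite.of_injective (f := fun (T : CT k lam) => fun j : Fin (k+1) =>
    (⟨T.1 j, by
      obtain ⟨h1, h2⟩ := chain_prop T.1 T.2.1 T.2.2.2 j.1 j.2
      refine ⟨h1, ?_⟩
      have h2' : psize (T.1 j) = j.1 := h2
      have := j.2
      omega⟩ : ↥{f : Ptn | IsPtn f ∧ psize f ≤ k}))
  intro T T' h
  exact Subtype.ext (funext fun j => congrArg Subtype.val (congrFun h j))

lemma ct_heq {k : ℕ} {s : Finset Ptn} (m m' : {x // x ∈ s}) (h : m = m')
    {U : CT k m.1} {U' : CT k m'.1} (h2 : U.1 = U'.1) : HEq U U' := by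
  subst h; exact heq_of_eq (Subtype.ext h2)

def chainEquiv (k : ℕ) (lam : Ptn) (hlam : psize lam = k + 1) :
    CT (k+1) lam ≃
      Σ mu : {m : Ptn // m ∈ (Pn k).filter (fun m => Covers lam m)}, CT k mu.1 where
  toFun T := ⟨⟨T.1 (Fin.castSucc (Fin.last k)), by
      have hc := T.2.2.2 (Fin.last k)
      rw [Fin.succ_last, T.2.2.1] at hc
      rw [Finset.mem_filter, mem_Pn]
      have hsz := hc.2.2.2
      exact ⟨⟨hc.2.1, by omega⟩, hc⟩⟩,
    ⟨fun j => T.1 j.castSucc, by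
      show T.1 (Fin.castSucc 0) = 0
      rw [Fin.castSucc_zero, T.2.1], rfl, by
      intro i
      have hc := T.2.2.2 i.castSucc
      rwa [Fin.succ_castSucc] at hc⟩⟩
  invFun x := ⟨Fin.lastCases lam x.2.1, by
      show Fin.lastCases (motive := fun _ => Ptn) lam x.2.1 (Fin.castSucc 0) = 0
      rw [Fin.lastCases_castSucc, x.2.2.1], Fin.lastCases_last, by
      intro i
      induction i using Fin.lastCases with
      | last =>
        simp only [Fin.succ_last, Fin.lastCases_last, Fin.lastCases_castSucc]
        have := x.2.2.2.1
        rw [this]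
        exact (Finset.mem_filter.1 x.1.2).2
      | cast j =>
        show Covers (Fin.lastCases (motive := fun _ => Ptn) lam x.2.1 j.castSucc.succ)
          (Fin.lastCases (motive := fun _ => Ptn) lam x.2.1 j.castSucc.castSucc)
        rw [Fin.succ_castSucc, Fin.lastCases_castSucc, Fin.lastCases_castSucc]
        exact x.2.2.2.2 j⟩
  left_inv T := by
    apply Subtype.ext
    funext j
    induction j using Fin.lastCases with
    | last =>
      show Fin.lastCases (motive := fun _ => Ptn) lam _ (Fin.last (k+1)) = T.1 (Fin.last (k+1))
      rw [Fin.lastCases_last, T.2.2.1]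
    | cast j =>
      show Fin.lastCases (motive := fun _ => Ptn) lam _ j.castSucc = T.1 j.castSucc
      rw [Fin.lastCases_castSucc]
  right_inv x := by
    obtain ⟨m, U⟩ := x
    have hval : Fin.lastCases (n := k+1) lam U.1 (Fin.castSucc (Fin.last k)) = m.1 := by
      rw [Fin.lastCases_castSucc, U.2.2.1]
    refine Sigma.ext (Subtype.ext hval) (ct_heq _ _ (Subtype.ext hval) ?_)
    funext j
    exact Fin.lastCases_castSucc (motive := fun _ => Ptn) (last := lam) (cast := U.1) j

lemma c_succ {k : ℕ} {lam : Ptn} (hlam : psize lam = k + 1) :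
    Nat.card (CT (k+1) lam) =
      ∑ mu ∈ (Pn k).filter (fun m => Covers lam m), Nat.card (CT k mu) := by
  rw [Nat.card_congr (chainEquiv k lam hlam)]
  letI : ∀ mu : Ptn, Fintype (CT k mu) := fun mu => Fintype.ofFinite _
  rw [Nat.card_eq_fintype_card, Fintype.card_sigma]
  rw [← Finset.sum_coe_sort ((Pn k).filter (fun m => Covers lam m))
    (fun mu => Nat.card (CT k mu))]
  exact Finset.sum_congr rfl fun mu _ => (Nat.card_eq_fintype_card).symm

-- F basics
lemma Pn_zero : Pn 0 = {0} := by
  ext f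
  rw [mem_Pn, Finset.mem_singleton]
  constructor
  · rintro ⟨h1, h2⟩; exact psize_eq_zero h2
  · rintro rfl; exact ⟨isPtn_zero, psize_zero⟩
lemma F_zero : F 0 = 1 := by
  rw [show F 0 = Nat.card (CT 0 0) from rfl]
  rw [Nat.card_eq_one_iff_unique]
  constructor
  · constructor
    intro T T'
    apply Subtype.ext
    funext j
    have hj : j = 0 := Subsingleton.elim (α := Fin 1) j 0
    rw [hj, T.2.1, T'.2.1]
  · exact ⟨⟨fun _ => 0, rfl, rfl, fun i => absurd i.2 (by omega)⟩⟩
lemma F_rec {lam : Ptn} {n : ℕ} (hlam : psize lam = n + 1) :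
    F lam = ∑ mu ∈ (Pn n).filter (fun m => Covers lam m), F mu := by
  rw [F_eq, hlam, c_succ hlam]
  apply Finset.sum_congr rfl
  intro mu hmu
  rw [Finset.mem_filter, mem_Pn] at hmu
  rw [F_eq, hmu.1.2]

/-- `D U^{n+1} ∅ = (n+1) U^n ∅`. -/
lemma sum_up : ∀ n : ℕ, ∀ mu : Ptn, IsPtn mu → psize mu = n →
    ∑ lam ∈ (Pn (n+1)).filter (fun l => Covers l mu), F lam = (n + 1) * F mu := by
  intro n
  induction n using Nat.strong_induction_on with
  | _ n IH =>
  intro mu hmu hsz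
  have step1 :
      ∑ lam ∈ (Pn (n+1)).filter (fun l => Covers l mu), F lam =
      ∑ lam ∈ Pn (n+1), ∑ nu ∈ Pn n,
        (if Covers lam mu ∧ Covers lam nu then F nu else 0) := by
    rw [Finset.sum_filter]
    apply Finset.sum_congr rfl
    intro lam hlam
    rw [mem_Pn] at hlam
    by_cases hc : Covers lam mu
    · rw [if_pos hc, F_rec hlam.2, Finset.sum_filter]
      apply Finset.sum_congr rfl
      intro nu _
      by_cases hcn : Covers lam nu
      · rw [if_pos hcn, if_pos ⟨hc, hcn⟩]
      · rw [if_neg hcn, if_neg (fun h => hcn h.2)]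
    · rw [if_neg hc]
      symm
      apply Finset.sum_eq_zero
      intro nu _
      rw [if_neg (fun h => hc h.1)]
  have step2 :
      ∑ lam ∈ Pn (n+1), ∑ nu ∈ Pn n,
        (if Covers lam mu ∧ Covers lam nu then F nu else 0) =
      ∑ nu ∈ Pn n, F nu *
        ((Pn (n+1)).filter (fun lam => Covers lam mu ∧ Covers lam nu)).card := by
    rw [Finset.sum_comm]
    apply Finset.sum_congr rfl
    intro nu _
    rw [← Finset.sum_filter, Finset.sum_const, smul_eq_mul, mul_comm]
  have step3 :
      ∑ nu ∈ Pn n, F nu *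
        ((Pn (n+1)).filter (fun lam => Covers lam mu ∧ Covers lam nu)).card =
      (∑ nu ∈ Pn n, F nu *
        ((Pn (n-1)).filter (fun rho => Covers mu rho ∧ Covers nu rho)).card) + F mu := by
    have : ∀ nu ∈ Pn n, F nu *
        ((Pn (n+1)).filter (fun lam => Covers lam mu ∧ Covers lam nu)).card =
        F nu * ((Pn (n-1)).filter (fun rho => Covers mu rho ∧ Covers nu rho)).card
          + F nu * (if mu = nu then 1 else 0) := by
      intro nu hnu
      rw [mem_Pn] at hnu
      rw [updown_card hmu hnu.1 hsz hnu.2, Nat.mul_add]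
    rw [Finset.sum_congr rfl this, Finset.sum_add_distrib]
    congr 1
    have e1 : ∀ x ∈ Pn n, (F x * if mu = x then 1 else 0) = if mu = x then F x else 0 := by
      intro x _
      by_cases h : mu = x
      · rw [if_pos h, if_pos h, Nat.mul_one]
      · rw [if_neg h, if_neg h, Nat.mul_zero]
    rw [Finset.sum_congr rfl e1, Finset.sum_ite_eq (Pn n) mu (fun x => F x),
      if_pos (mem_Pn.2 ⟨hmu, hsz⟩)]
  have step4 :
      ∑ nu ∈ Pn n, F nu *
        ((Pn (n-1)).filter (fun rho => Covers mu rho ∧ Covers nu rho)).card =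
      n * F mu := by
    rcases Nat.eq_zero_or_pos n with rfl | hn
    · rw [Finset.sum_eq_zero, Nat.zero_mul]
      intro nu _
      have : (Pn (0-1)).filter (fun rho => Covers mu rho ∧ Covers nu rho) = ∅ := by
        apply Finset.filter_false_of_mem
        intro rho _
        rintro ⟨h1, _⟩
        have := h1.2.2.2
        omega
      rw [this, Finset.card_empty, Nat.mul_zero]
    · -- n ≥ 1
      have hswap :
          ∑ nu ∈ Pn n, F nu *
            ((Pn (n-1)).filter (fun rho => Covers mu rho ∧ Covers nu rho)).card =
          ∑ rho ∈ (Pn (n-1)).filter (fun rho => Covers mu rho),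
            ∑ nu ∈ (Pn n).filter (fun nu => Covers nu rho), F nu := by
        have lhs_eq : ∀ nu ∈ Pn n, F nu *
            ((Pn (n-1)).filter (fun rho => Covers mu rho ∧ Covers nu rho)).card =
            ∑ rho ∈ Pn (n-1), (if Covers mu rho ∧ Covers nu rho then F nu else 0) := by
          intro nu _
          rw [← Finset.sum_filter, Finset.sum_const, smul_eq_mul, mul_comm]
        rw [Finset.sum_congr rfl lhs_eq, Finset.sum_comm]
        symm
        rw [Finset.sum_filter]
        apply Finset.sum_congr rfl
        intro rho _
        by_cases hc : Covers mu rho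
        · rw [if_pos hc, Finset.sum_filter]
          apply Finset.sum_congr rfl
          intro nu _
          by_cases hcn : Covers nu rho
          · rw [if_pos hcn, if_pos ⟨hc, hcn⟩]
          · rw [if_neg hcn, if_neg (fun h => hcn h.2)]
        · rw [if_neg hc]
          symm
          apply Finset.sum_eq_zero
          intro nu _
          rw [if_neg (fun h => hc h.1)]
      rw [hswap]
      have hdsum : ∀ rho ∈ (Pn (n-1)).filter (fun rho => Covers mu rho),
          ∑ nu ∈ (Pn n).filter (fun nu => Covers nu rho), F nu = n * F rho := by
        intro rho hrho
        rw [Finset.mem_filter, mem_Pn] at hrho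
        have h1 : n - 1 + 1 = n := by omega
        have := IH (n-1) (by omega) rho hrho.1.1 hrho.1.2
        rw [h1] at this
        rw [this]
      rw [Finset.sum_congr rfl hdsum, ← Finset.mul_sum]
      congr 1
      rw [← F_rec (n := n - 1) (by omega)]
  rw [step1, step2, step3, step4]
  ring
lemma sum_F_sq_finset (n : ℕ) : n.factorial = ∑ lam ∈ Pn n, (F lam) ^ 2 := by
  induction n with
  | zero => rw [Pn_zero, Finset.sum_singleton, F_zero]; rfl
  | succ n ih =>
    have step1 : ∑ lam ∈ Pn (n+1), (F lam) ^ 2 =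
        ∑ lam ∈ Pn (n+1), ∑ nu ∈ Pn n, (if Covers lam nu then F lam * F nu else 0) := by
      apply Finset.sum_congr rfl
      intro lam hlam
      rw [mem_Pn] at hlam
      rw [pow_two]
      nth_rewrite 2 [F_rec hlam.2 (n := n)]
      rw [Finset.mul_sum, Finset.sum_filter]
    have step2 : ∑ lam ∈ Pn (n+1), ∑ nu ∈ Pn n,
          (if Covers lam nu then F lam * F nu else 0) =
        ∑ nu ∈ Pn n, (∑ lam ∈ (Pn (n+1)).filter (fun l => Covers l nu), F lam) * F nu := by
      rw [Finset.sum_comm]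
      apply Finset.sum_congr rfl
      intro nu _
      rw [Finset.sum_mul, Finset.sum_filter]
    have step3 : ∑ nu ∈ Pn n,
        (∑ lam ∈ (Pn (n+1)).filter (fun l => Covers l nu), F lam) * F nu =
        (n+1) * ∑ nu ∈ Pn n, (F nu) ^ 2 := by
      rw [Finset.mul_sum]
      apply Finset.sum_congr rfl
      intro nu hnu
      rw [mem_Pn] at hnu
      rw [sum_up n nu hnu.1 hnu.2, pow_two]
      ring
    rw [step1, step2, step3, ← ih, Nat.factorial_succ]
lemma finsum_eq_finset_sum (n : ℕ) :
    (∑ᶠ (lam : Ptn) (_ : IsPtn lam ∧ psize lam = n), (F lam) ^ 2) =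
      ∑ lam ∈ Pn n, (F lam) ^ 2 := by
  have hset : ({lam | IsPtn lam ∧ psize lam = n} : Set Ptn) = ↑(Pn n) :=
    ((finite_ptnEQ n).coe_toFinset).symm
  calc (∑ᶠ (lam : Ptn) (_ : IsPtn lam ∧ psize lam = n), (F lam) ^ 2)
      = ∑ᶠ lam ∈ ({lam | IsPtn lam ∧ psize lam = n} : Set Ptn), (F lam)^2 := rfl
    _ = ∑ᶠ lam ∈ (↑(Pn n) : Set Ptn), (F lam)^2 := by rw [hset]
    _ = ∑ lam ∈ Pn n, (F lam)^2 := finsum_mem_coe_finset _ _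

theorem sum_F_sq' (n : ℕ) :
    n.factorial = ∑ᶠ (lam : Ptn) (_ : IsPtn lam ∧ psize lam = n), (F lam) ^ 2 := by
  rw [finsum_eq_finset_sum]
  exact sum_F_sq_finset n


end WAPpr

end

open WAPpr in
/-- `n! = ∑_{λ ⊢ n} F_λ²`. -/
theorem sum_F_sq (n : ℕ) :
    n.factorial = ∑ᶠ (lam : Ptn) (_ : IsPtn lam ∧ psize lam = n), (F lam) ^ 2 := by
  rw [WAPpr.finsum_eq_finset_sum]
  exact WAPpr.sum_F_sq_finset n
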